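/- Suppose ρ satisfies detailed balance for W, and let a + b = β. Then for every t ≥ 0 and every observable Q : K → ℝ, the function h ↦ ∑_x ρ(x) (e^{t L_h} Q)(x) is differentiable at h = 0 (HasDerivAt) with derivative β [ ∑_x ρ(x) V(x) Q(x) − ∑_x ρ(x) V(x) (e^{tL} Q)(x) ]. (Integrated equilibrium response: ⟨Q(t)⟩^h − ⟨Q(t)⟩_eq = hβ[⟨V(t)Q(t)⟩_eq − ⟨V(0)Q(t)⟩_eq] + o(h).) -/

import Mathlib

open scoped Nat Matrix

/-- The generator matrix of the Markov jump process with rates `W`: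
entry `W x y` at `(x, y)` for `x ≠ y` and `-∑_{y ≠ x} W x y` on the diagonal. -/
noncomputable def genMatrix {K : Type*} [Fintype K] [DecidableEq K] (W : K → K → ℝ) :
    Matrix K K ℝ :=
  Matrix.of fun x y =>
    if x = y then -∑ z ∈ Finset.univ.filter (fun z => z ≠ x), W x z else W x y

/-- The semigroup `e^{tL}` (matrix exponential of `t • L`). -/
noncomputable def expL {K : Type*} [Fintype K] [DecidableEq K] (W : K → K → ℝ) (t : ℝ) :
    Matrix K K ℝ :=
  NormedSpace.exp (t • genMatrix W)

/-- Action of `e^{tL}` on observables: `(e^{tL} f)(x) = ∑ y, (e^{tL})_{x,y} f y`. -/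
noncomputable def actE {K : Type*} [Fintype K] [DecidableEq K] (W : K → K → ℝ) (t : ℝ)
    (f : K → ℝ) : K → ℝ :=
  fun x => ∑ y, expL W t x y * f y

/-- Action of `e^{tL}` on distributions: `(μ e^{tL})(x) = ∑ z, μ z (e^{tL})_{z,x}`. -/
noncomputable def muE {K : Type*} [Fintype K] [DecidableEq K] (W : K → K → ℝ) (μ : K → ℝ)
    (t : ℝ) : K → ℝ :=
  fun x => ∑ z, μ z * expL W t z x

/-- The backward generator acting on observables. -/
noncomputable def genL {K : Type*} [Fintype K] (W : K → K → ℝ) (f : K → ℝ) : K → ℝ :=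
  fun x => ∑ y, W x y * (f y - f x)

/-- The linearized perturbation operator
`(L' f)(x) = ∑ y, W x y * (b V y - a V x) * (f y - f x)`. -/
noncomputable def genL' {K : Type*} [Fintype K] (W : K → K → ℝ) (V : K → ℝ) (a b : ℝ)
    (f : K → ℝ) : K → ℝ :=
  fun x => ∑ y, W x y * (b * V y - a * V x) * (f y - f x)

/-- The perturbed rates `W_h x y = W x y * exp (h (b V y - a V x))`. -/
noncomputable def pertW {K : Type*} (W : K → K → ℝ) (V : K → ℝ) (a b h : ℝ) :
    K → K → ℝ :=
  fun x y => W x y * Real.exp (h * (b * V y - a * V x))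

/-- Auxiliary basis matrix for a jump `x' → y'`. -/
noncomputable def jumpB {K : Type*} [Fintype K] [DecidableEq K] (x' y' : K) : Matrix K K ℝ :=
  Matrix.single x' y' 1 - Matrix.single x' x' 1

lemma vec_genMatrix_sum {K : Type*} [Fintype K] [DecidableEq K]
    (ρc : K → ℝ) (c : K → K → ℝ) (y0 : K) :
    ∑ x, ρc x * genMatrix c x y0
      = ∑ x ∈ Finset.univ.filter (fun z => z ≠ y0), (ρc x * c x y0 - ρc y0 * c y0 x) := by
  classical
  rw [← Finset.sum_filter_add_sum_filter_not Finset.univ (fun x => x ≠ y0)]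
  have h2 : Finset.univ.filter (fun x : K => ¬ x ≠ y0) = {y0} := by ext z; simp
  have h1 : ∀ x ∈ Finset.univ.filter (fun z : K => z ≠ y0),
      ρc x * genMatrix c x y0 = ρc x * c x y0 := by
    intro x hx
    simp only [Finset.mem_filter] at hx
    simp [genMatrix, hx.2]
  rw [Finset.sum_congr rfl h1, h2, Finset.sum_singleton]
  simp only [genMatrix, Matrix.of_apply, eq_self_iff_true, if_true]
  rw [Finset.sum_sub_distrib, mul_neg, Finset.mul_sum, sub_eq_add_neg]

lemma genMatrix_eq_sum {K : Type*} [Fintype K] [DecidableEq K] (c : K → K → ℝ) :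
    genMatrix c = ∑ x' : K, ∑ y' ∈ Finset.univ.filter (fun z => z ≠ x'),
      c x' y' • jumpB x' y' := by
  classical
  ext i j
  have houter : ((∑ x' : K, ∑ y' ∈ Finset.univ.filter (fun z => z ≠ x'),
      c x' y' • jumpB x' y' : Matrix K K ℝ)) i j
      = ∑ y' ∈ Finset.univ.filter (fun z => z ≠ i),
        c i y' * ((if y' = j then (1:ℝ) else 0) - (if i = j then 1 else 0)) := by
    rw [Matrix.sum_apply]
    rw [Finset.sum_eq_single i]
    · rw [Matrix.sum_apply]
      refine Finset.sum_congr rfl fun y' hy' => ?_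
      simp only [Finset.mem_filter, Finset.mem_univ, true_and] at hy'
      simp [jumpB, Matrix.single, hy']
    · intro x' _ hx'
      rw [Matrix.sum_apply]
      apply Finset.sum_eq_zero
      intro y' hy'
      simp [jumpB, Matrix.single, hx']
    · simp
  rw [houter]
  rcases eq_or_ne i j with rfl | hij
  · have h3 : ∀ y' ∈ Finset.univ.filter (fun z : K => z ≠ i),
        c i y' * ((if y' = i then (1:ℝ) else 0) - (if i = i then 1 else 0)) = -(c i y') := by
      intro y' hy'
      simp only [Finset.mem_filter, Finset.mem_univ, true_and] at hy'
      simp [hy']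
    rw [Finset.sum_congr rfl h3, Finset.sum_neg_distrib]
    simp [genMatrix]
  · have h3 : ∀ y' ∈ Finset.univ.filter (fun z : K => z ≠ i),
        c i y' * ((if y' = j then (1:ℝ) else 0) - (if i = j then 1 else 0))
          = if y' = j then c i y' else 0 := by
      intro y' _
      rcases eq_or_ne y' j with rfl | h
      · simp [hij]
      · simp [h, hij]
    rw [Finset.sum_congr rfl h3, Finset.sum_ite_eq' _ j]
    simp [genMatrix, hij, Ne.symm hij]

/-- integrated equilibrium response: under detailed balance and
`a + b = β`, for every `t ≥ 0` the map `h ↦ ∑ x, ρ x * (e^{t L_h} Q) x` is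
differentiable at `h = 0` with derivative
`β * (⟨V(t)Q(t)⟩_eq - ⟨V(0)Q(t)⟩_eq)`. -/
theorem integrated_equilibrium_response
    {K : Type*} [Fintype K] [Nonempty K] [DecidableEq K]
    (W : K → K → ℝ) (hW : ∀ x y : K, x ≠ y → 0 ≤ W x y)
    (ρ : K → ℝ) (hρ0 : ∀ x, 0 ≤ ρ x) (hρ1 : ∑ x, ρ x = 1)
    (hdb : ∀ x y : K, ρ x * W x y = ρ y * W y x)
    (V Q : K → ℝ) (a b β : ℝ) (hab : a + b = β) (t : ℝ) (ht : 0 ≤ t) :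
    HasDerivAt
      (fun h : ℝ => ∑ x, ρ x * ∑ y, expL (pertW W V a b h) t x y * Q y)
      (β * ((∑ x, ρ x * V x * Q x) - ∑ x, ρ x * V x * actE W t Q x)) 0 := by
  classical
  letI : SeminormedRing (Matrix K K ℝ) := Matrix.linftyOpSemiNormedRing
  letI : NormedRing (Matrix K K ℝ) := Matrix.linftyOpNormedRing
  letI : NormedAlgebra ℝ (Matrix K K ℝ) := Matrix.linftyOpNormedAlgebra
  letI : NormOneClass (Matrix K K ℝ) := Matrix.linfty_opNormOneClass
  -- vecMul helper lemmas
  have vecMul_smul' : ∀ (v : K → ℝ) (r : ℝ) (M : Matrix K K ℝ),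
      v ᵥ* (r • M) = r • (v ᵥ* M) := by
    intro v r M
    ext y
    simp [Matrix.vecMul, dotProduct, Finset.mul_sum, mul_left_comm]
  have smul_vecMul' : ∀ (r : ℝ) (v : K → ℝ) (M : Matrix K K ℝ),
      (r • v) ᵥ* M = r • (v ᵥ* M) := by
    intro r v M
    ext y
    simp [Matrix.vecMul, dotProduct, Finset.mul_sum, mul_assoc]
  -- the pairing observables
  set σ : K → ℝ := fun x => ρ x * V x with hσdef
  let linQ : (K → ℝ) → (Matrix K K ℝ →ₗ[ℝ] ℝ) := fun v =>
    { toFun := fun M => (v ᵥ* M) ⬝ᵥ Q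
      map_add' := fun M N => by
        show (v ᵥ* (M + N)) ⬝ᵥ Q = (v ᵥ* M) ⬝ᵥ Q + (v ᵥ* N) ⬝ᵥ Q
        rw [Matrix.vecMul_add, add_dotProduct]
      map_smul' := fun r M => by
        show (v ᵥ* (r • M)) ⬝ᵥ Q = r • ((v ᵥ* M) ⬝ᵥ Q)
        rw [vecMul_smul' v r M, smul_dotProduct] }
  set Φ : Matrix K K ℝ →L[ℝ] ℝ := LinearMap.toContinuousLinearMap (linQ ρ) with hΦdef
  set Ψ : Matrix K K ℝ →L[ℝ] ℝ := LinearMap.toContinuousLinearMap (linQ σ) with hΨdef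
  have hΦapp : ∀ M : Matrix K K ℝ, Φ M = (ρ ᵥ* M) ⬝ᵥ Q := fun M => rfl
  have hΨapp : ∀ M : Matrix K K ℝ, Ψ M = (σ ᵥ* M) ⬝ᵥ Q := fun M => rfl
  have hpair : ∀ (v : K → ℝ) (E : Matrix K K ℝ),
      (v ᵥ* E) ⬝ᵥ Q = ∑ x, v x * ∑ y, E x y * Q y := by
    intro v E
    simp only [Matrix.vecMul, dotProduct, Finset.sum_mul, Finset.mul_sum, mul_assoc]
    exact Finset.sum_comm
  -- the perturbed generator and its derivative
  set P : ℝ → Matrix K K ℝ := fun h => t • genMatrix (pertW W V a b h) with hPdef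
  set Dm : ℝ → Matrix K K ℝ := fun h =>
      t • ∑ x' : K, ∑ y' ∈ Finset.univ.filter (fun z => z ≠ x'),
        (W x' y' * (Real.exp (h * (b * V y' - a * V x')) * (b * V y' - a * V x'))) • jumpB x' y'
      with hDmdef
  have hgen : ∀ h : ℝ, genMatrix (pertW W V a b h)
      = ∑ x' : K, ∑ y' ∈ Finset.univ.filter (fun z => z ≠ x'),
        (W x' y' * Real.exp (h * (b * V y' - a * V x'))) • jumpB x' y' :=
    fun h => genMatrix_eq_sum (pertW W V a b h)
  have hPd : ∀ h : ℝ, HasDerivAt P (Dm h) h := by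
    intro h
    simp only [hPdef, hDmdef, hgen]
    refine HasDerivAt.const_smul t ?_
    refine HasDerivAt.fun_sum fun x' _ => HasDerivAt.fun_sum fun y' _ => ?_
    exact (((hasDerivAt_mul_const (b * V y' - a * V x')).exp).const_mul
      (W x' y')).smul_const (jumpB x' y')
  -- the derivative of powers
  set Sd : ℕ → ℝ → Matrix K K ℝ := fun n h =>
      ∑ i ∈ Finset.range n, P h ^ i * Dm h * P h ^ (n - 1 - i) with hSddef
  have hSd : ∀ (n : ℕ) (h : ℝ), HasDerivAt (fun h => P h ^ n) (Sd n h) h := by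
    intro n
    induction n with
    | zero =>
      intro h
      simp only [hSddef, pow_zero, Finset.range_zero, Finset.sum_empty]
      exact hasDerivAt_const h 1
    | succ n ih =>
      intro h
      have h1 := (hPd h).mul (ih h)
      have h2 : (fun h => P h ^ (n + 1)) = fun h => P h * P h ^ n :=
        funext fun h => pow_succ' _ _
      have h3 : Sd (n + 1) h = Dm h * P h ^ n + P h * Sd n h := by
        simp only [hSddef]
        rw [Finset.sum_range_succ']
        rw [add_comm]
        congr 1
        · rw [pow_zero, one_mul]
          norm_num
        · rw [Finset.mul_sum]
          refine Finset.sum_congr rfl fun i hi => ?_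
          have he : n + 1 - 1 - (i + 1) = n - 1 - i := by omega
          rw [he, pow_succ']
          simp only [mul_assoc]
      rw [h2, h3]
      exact h1
  -- the summands of the expansion and their derivatives
  set gf : ℕ → ℝ → ℝ := fun n h => Φ ((n ! : ℝ)⁻¹ • P h ^ n) with hgfdef
  set gf' : ℕ → ℝ → ℝ := fun n h => Φ ((n ! : ℝ)⁻¹ • Sd n h) with hgf'def
  have hgd : ∀ (n : ℕ) (y : ℝ), HasDerivAt (gf n) (gf' n y) y := fun n y =>
    Φ.hasFDerivAt.comp_hasDerivAt y ((hSd n y).const_smul ((n ! : ℝ)⁻¹))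
  -- uniform bounds on the ball of radius 1
  set CP : ℝ := |t| * ∑ x' : K, ∑ y' ∈ Finset.univ.filter (fun z => z ≠ x'),
      (|W x' y'| * Real.exp |b * V y' - a * V x'|) * ‖jumpB x' y'‖ with hCPdef
  set CD : ℝ := |t| * ∑ x' : K, ∑ y' ∈ Finset.univ.filter (fun z => z ≠ x'),
      (|W x' y'| * (Real.exp |b * V y' - a * V x'| * |b * V y' - a * V x'|)) * ‖jumpB x' y'‖
      with hCDdef
  have hCP0 : 0 ≤ CP := by
    rw [hCPdef]
    positivity
  have hCD0 : 0 ≤ CD := by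
    rw [hCDdef]
    positivity
  have hexpb : ∀ (h θ0 : ℝ), h ∈ Metric.ball (0:ℝ) 1 → Real.exp (h * θ0) ≤ Real.exp |θ0| := by
    intro h θ0 hh
    rw [Metric.mem_ball, Real.dist_eq, sub_zero] at hh
    apply Real.exp_le_exp.2
    calc h * θ0 ≤ |h * θ0| := le_abs_self _
      _ = |h| * |θ0| := abs_mul _ _
      _ ≤ 1 * |θ0| := by
        apply mul_le_mul_of_nonneg_right (le_of_lt hh) (abs_nonneg _)
      _ = |θ0| := one_mul _
  have hCP : ∀ h ∈ Metric.ball (0:ℝ) 1, ‖P h‖ ≤ CP := by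
    intro h hh
    have : P h = t • ∑ x' : K, ∑ y' ∈ Finset.univ.filter (fun z => z ≠ x'),
        (W x' y' * Real.exp (h * (b * V y' - a * V x'))) • jumpB x' y' := by
      simp only [hPdef, hgen h]
    rw [this, norm_smul, Real.norm_eq_abs, hCPdef]
    refine mul_le_mul_of_nonneg_left ?_ (abs_nonneg t)
    refine (norm_sum_le _ _).trans ((Finset.sum_le_sum fun x' _ =>
      (norm_sum_le _ _).trans (Finset.sum_le_sum fun y' _ => ?_)))
    rw [norm_smul, Real.norm_eq_abs, abs_mul, abs_of_pos (Real.exp_pos _)]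
    refine mul_le_mul_of_nonneg_right ?_ (norm_nonneg _)
    exact mul_le_mul_of_nonneg_left (hexpb h _ hh) (abs_nonneg _)
  have hCD : ∀ h ∈ Metric.ball (0:ℝ) 1, ‖Dm h‖ ≤ CD := by
    intro h hh
    rw [hDmdef, norm_smul, Real.norm_eq_abs, hCDdef]
    refine mul_le_mul_of_nonneg_left ?_ (abs_nonneg t)
    refine (norm_sum_le _ _).trans ((Finset.sum_le_sum fun x' _ =>
      (norm_sum_le _ _).trans (Finset.sum_le_sum fun y' _ => ?_)))
    rw [norm_smul, Real.norm_eq_abs, abs_mul, abs_mul, abs_of_pos (Real.exp_pos _)]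
    refine mul_le_mul_of_nonneg_right ?_ (norm_nonneg _)
    refine mul_le_mul_of_nonneg_left ?_ (abs_nonneg _)
    exact mul_le_mul_of_nonneg_right (hexpb h _ hh) (abs_nonneg _)
  have hSdb : ∀ (n : ℕ), ∀ h ∈ Metric.ball (0:ℝ) 1,
      ‖Sd n h‖ ≤ (n : ℝ) * (CP ^ (n - 1) * CD) := by
    intro n h hh
    have hterm : ∀ i ∈ Finset.range n,
        ‖P h ^ i * Dm h * P h ^ (n - 1 - i)‖ ≤ CP ^ (n - 1) * CD := by
      intro i hi
      have hi' : i < n := Finset.mem_range.mp hi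
      calc ‖P h ^ i * Dm h * P h ^ (n - 1 - i)‖
          ≤ ‖P h ^ i * Dm h‖ * ‖P h ^ (n - 1 - i)‖ := norm_mul_le _ _
        _ ≤ (‖P h ^ i‖ * ‖Dm h‖) * ‖P h ^ (n - 1 - i)‖ :=
            mul_le_mul_of_nonneg_right (norm_mul_le _ _) (norm_nonneg _)
        _ ≤ ((‖P h‖ ^ i) * ‖Dm h‖) * ‖P h‖ ^ (n - 1 - i) := by
            refine mul_le_mul (mul_le_mul_of_nonneg_right (norm_pow_le _ _) (norm_nonneg _))
              (norm_pow_le _ _) (norm_nonneg _) ?_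
            positivity
        _ ≤ ((CP ^ i) * CD) * CP ^ (n - 1 - i) := by
            gcongr
            · exact hCP h hh
            · exact hCD h hh
            · exact hCP h hh
        _ = CP ^ (n - 1) * CD := by
            rw [mul_right_comm, ← pow_add]
            congr 2
            omega
    calc ‖Sd n h‖ ≤ ∑ i ∈ Finset.range n, ‖P h ^ i * Dm h * P h ^ (n - 1 - i)‖ := by
          rw [hSddef]; exact norm_sum_le _ _
      _ ≤ ∑ _i ∈ Finset.range n, CP ^ (n - 1) * CD := Finset.sum_le_sum hterm
      _ = (n : ℝ) * (CP ^ (n - 1) * CD) := by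
          rw [Finset.sum_const, Finset.card_range, nsmul_eq_mul]
  -- summable bound
  set u : ℕ → ℝ := fun n => Φ.opNorm * (((n - 1)! : ℝ)⁻¹ * (CP ^ (n - 1) * CD)) with hudef
  have hfact : ∀ n : ℕ, (n ! : ℝ)⁻¹ * n ≤ ((n - 1)! : ℝ)⁻¹ := by
    intro n
    cases n with
    | zero => simp
    | succ m =>
      have h1 : ((m + 1)! : ℝ) = (m + 1) * (m ! : ℝ) := by
        push_cast [Nat.factorial_succ]; ring
      have h2 : (m ! : ℝ) ≠ 0 := Nat.cast_ne_zero.2 m.factorial_ne_zero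
      have h3 : ((m : ℝ) + 1) ≠ 0 := by positivity
      simp only [Nat.add_sub_cancel]
      refine le_of_eq ?_
      rw [h1]
      push_cast
      field_simp
  have hsummand : Summable (fun n : ℕ => CP ^ (n - 1) * ((n - 1)! : ℝ)⁻¹) := by
    rw [← summable_nat_add_iff 1]
    simpa [div_eq_mul_inv] using Real.summable_pow_div_factorial CP
  have hu : Summable u := by
    have h0 : Summable (fun n : ℕ => (Φ.opNorm * CD) * (CP ^ (n - 1) * ((n - 1)! : ℝ)⁻¹)) :=
      hsummand.mul_left _
    refine h0.congr fun n => ?_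
    rw [hudef]
    ring
  have hub : ∀ (n : ℕ), ∀ y ∈ Metric.ball (0:ℝ) 1, ‖gf' n y‖ ≤ u n := by
    intro n y hy
    have h1 : ‖gf' n y‖ ≤ Φ.opNorm * ((n ! : ℝ)⁻¹ * ‖Sd n y‖) := by
      rw [hgf'def]
      refine (Φ.le_opNorm _).trans (le_of_eq ?_)
      rw [norm_smul, Real.norm_eq_abs, abs_of_nonneg (by positivity : (0:ℝ) ≤ (n ! : ℝ)⁻¹)]
      rfl
    refine h1.trans ?_
    have h2 : (n ! : ℝ)⁻¹ * ‖Sd n y‖ ≤ (n ! : ℝ)⁻¹ * ((n : ℝ) * (CP ^ (n - 1) * CD)) :=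
      mul_le_mul_of_nonneg_left (hSdb n y hy) (by positivity)
    refine (mul_le_mul_of_nonneg_left h2 Φ.opNorm_nonneg).trans ?_
    rw [hudef]
    have h3 : (n ! : ℝ)⁻¹ * ((n : ℝ) * (CP ^ (n - 1) * CD))
        = ((n ! : ℝ)⁻¹ * (n : ℝ)) * (CP ^ (n - 1) * CD) := by ring
    rw [h3]
    refine mul_le_mul_of_nonneg_left ?_ Φ.opNorm_nonneg
    exact mul_le_mul_of_nonneg_right (hfact n) (by positivity)
  -- summability at the center
  have hexpsum : ∀ h : ℝ, Summable fun n : ℕ => (n ! : ℝ)⁻¹ • P h ^ n := fun h =>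
    NormedSpace.expSeries_summable' (𝕂 := ℝ) (P h)
  have hg0 : Summable fun n : ℕ => gf n 0 :=
    (hexpsum 0).map Φ.toLinearMap.toAddMonoidHom Φ.continuous
  -- the main uniform-convergence step
  have key : HasDerivAt (fun z : ℝ => ∑' n : ℕ, gf n z) (∑' n : ℕ, gf' n 0) 0 :=
    hasDerivAt_tsum_of_isPreconnected hu Metric.isOpen_ball
      ((convex_ball (0:ℝ) 1).isPreconnected) (fun n y _ => hgd n y) hub
      (Metric.mem_ball_self one_pos) hg0 (Metric.mem_ball_self one_pos)
  -- identification of the function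
  have hfun : (fun h : ℝ => ∑ x, ρ x * ∑ y, expL (pertW W V a b h) t x y * Q y)
      = fun z : ℝ => ∑' n : ℕ, gf n z := by
    funext h
    have h1 : expL (pertW W V a b h) t = ∑' n : ℕ, (n ! : ℝ)⁻¹ • P h ^ n := by
      rw [show expL (pertW W V a b h) t
          = NormedSpace.exp (t • genMatrix (pertW W V a b h)) from rfl,
        NormedSpace.exp_eq_tsum ℝ]
    calc ∑ x, ρ x * ∑ y, expL (pertW W V a b h) t x y * Q y
        = Φ (expL (pertW W V a b h) t) := by rw [hΦapp, hpair]
      _ = Φ (∑' n : ℕ, (n ! : ℝ)⁻¹ • P h ^ n) := by rw [h1]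
      _ = ∑' n : ℕ, gf n h := Φ.map_tsum (hexpsum h)
  -- identification of the derivative value
  have hP0 : P 0 = t • genMatrix W := by
    simp only [hPdef]
    congr 1
    have : pertW W V a b 0 = W := by funext x y; simp [pertW]
    rw [this]
  have hD0 : Dm 0 = t • genMatrix (fun x y => W x y * (b * V y - a * V x)) := by
    simp only [hDmdef]
    congr 1
    rw [genMatrix_eq_sum (fun x y => W x y * (b * V y - a * V x))]
    refine Finset.sum_congr rfl fun x' _ => Finset.sum_congr rfl fun y' _ => ?_
    norm_num
  have hstat : ρ ᵥ* genMatrix W = 0 := by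
    funext y0
    show ∑ x, ρ x * genMatrix W x y0 = 0
    rw [vec_genMatrix_sum]
    refine Finset.sum_eq_zero fun x _ => ?_
    linear_combination hdb x y0
  have hkey : ρ ᵥ* genMatrix (fun x y => W x y * (b * V y - a * V x))
      = (-β) • (σ ᵥ* genMatrix W) := by
    funext y0
    show ∑ x, ρ x * genMatrix (fun x y => W x y * (b * V y - a * V x)) x y0
      = -β * ∑ x, σ x * genMatrix W x y0
    rw [vec_genMatrix_sum, vec_genMatrix_sum, Finset.mul_sum]
    refine Finset.sum_congr rfl fun x _ => ?_
    simp only [hσdef]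
    linear_combination ((b * V x - a * V y0) + β * V y0) * hdb x y0
      + (ρ x * W x y0 * (V y0 - V x)) * hab
  have hstatP : ρ ᵥ* P 0 = 0 := by
    rw [hP0, vecMul_smul' ρ t _, hstat, smul_zero]
  have hρD : ρ ᵥ* Dm 0 = (-β) • (σ ᵥ* P 0) := by
    rw [hD0, hP0, vecMul_smul', hkey, vecMul_smul', smul_comm]
  have hΦSd : ∀ n : ℕ, Φ (Sd n 0) = if n = 0 then 0 else (-β) * ((σ ᵥ* P 0 ^ n) ⬝ᵥ Q) := by
    intro n
    rcases Nat.eq_zero_or_pos n with rfl | hn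
    · simp [hSddef]
    · rw [if_neg (Nat.pos_iff_ne_zero.mp hn)]
      have hSdn : Sd n 0 = ∑ i ∈ Finset.range n, P 0 ^ i * Dm 0 * P 0 ^ (n - 1 - i) := by
        rw [hSddef]
      rw [hSdn, map_sum]
      rw [Finset.sum_eq_single_of_mem 0 (Finset.mem_range.mpr hn)]
      · rw [pow_zero, one_mul, Nat.sub_zero, hΦapp, ← Matrix.vecMul_vecMul, hρD,
          smul_vecMul', Matrix.vecMul_vecMul, ← pow_succ']
        have hn1 : n - 1 + 1 = n := Nat.succ_pred_eq_of_pos hn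
        rw [hn1, smul_dotProduct, smul_eq_mul]
      · intro i hi hne
        obtain ⟨j, rfl⟩ : ∃ j, i = j + 1 :=
          ⟨i - 1, (Nat.succ_pred_eq_of_pos (Nat.pos_of_ne_zero hne)).symm⟩
        rw [hΦapp, mul_assoc, pow_succ', mul_assoc, ← Matrix.vecMul_vecMul, hstatP]
        simp
  have hg'val : ∀ n : ℕ, gf' n 0
      = (-β) * Ψ ((n ! : ℝ)⁻¹ • P 0 ^ n) + (if n = 0 then β * Ψ 1 else 0) := by
    intro n
    have hsm : gf' n 0 = (n ! : ℝ)⁻¹ * Φ (Sd n 0) := by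
      show Φ ((n ! : ℝ)⁻¹ • Sd n 0) = _
      rw [map_smul, smul_eq_mul]
    rcases Nat.eq_zero_or_pos n with rfl | hn
    · rw [hsm, hΦSd]
      simp [hΨapp]
    · rw [hsm, hΦSd, if_neg (Nat.pos_iff_ne_zero.mp hn), if_neg (Nat.pos_iff_ne_zero.mp hn),
        add_zero, hΨapp, vecMul_smul', smul_dotProduct, smul_eq_mul]
      ring
  have hΨsum : Summable fun n : ℕ => Ψ ((n ! : ℝ)⁻¹ • P 0 ^ n) :=
    (hexpsum 0).map Ψ.toLinearMap.toAddMonoidHom Ψ.continuous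
  have hs1 : Summable fun n : ℕ => (-β) * Ψ ((n ! : ℝ)⁻¹ • P 0 ^ n) := hΨsum.mul_left _
  have hs2 : Summable fun n : ℕ => (if n = 0 then β * Ψ 1 else 0) :=
    (hasSum_ite_eq 0 (β * Ψ 1)).summable
  have hexp0 : NormedSpace.exp (P 0) = expL W t := by rw [hP0]; exact rfl
  have hval : ∑' n : ℕ, gf' n 0
      = β * ((∑ x, ρ x * V x * Q x) - ∑ x, ρ x * V x * actE W t Q x) := by
    have htsum_exp : (∑' n : ℕ, (n ! : ℝ)⁻¹ • P 0 ^ n) = expL W t := by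
      rw [← hexp0, NormedSpace.exp_eq_tsum ℝ]
    calc ∑' n : ℕ, gf' n 0
        = ∑' n : ℕ, ((-β) * Ψ ((n ! : ℝ)⁻¹ • P 0 ^ n) + (if n = 0 then β * Ψ 1 else 0)) :=
          tsum_congr hg'val
      _ = (∑' n : ℕ, (-β) * Ψ ((n ! : ℝ)⁻¹ • P 0 ^ n))
            + ∑' n : ℕ, (if n = 0 then β * Ψ 1 else 0) := Summable.tsum_add hs1 hs2
      _ = (-β) * (∑' n : ℕ, Ψ ((n ! : ℝ)⁻¹ • P 0 ^ n)) + β * Ψ 1 := by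
          rw [tsum_mul_left, (hasSum_ite_eq 0 (β * Ψ 1)).tsum_eq]
      _ = (-β) * Ψ (expL W t) + β * Ψ 1 := by
          rw [← Ψ.map_tsum (hexpsum 0), htsum_exp]
      _ = β * ((∑ x, ρ x * V x * Q x) - ∑ x, ρ x * V x * actE W t Q x) := ?_
    have h1 : Ψ (expL W t) = ∑ x, ρ x * V x * actE W t Q x := by
      rw [hΨapp, hpair]
      refine Finset.sum_congr rfl fun x _ => ?_
      simp only [hσdef]
      rfl
    have h2 : Ψ (1 : Matrix K K ℝ) = ∑ x, ρ x * V x * Q x := by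
      rw [hΨapp, Matrix.vecMul_one]
      simp only [dotProduct, hσdef]
    rw [h1, h2]
    ring
  rw [hfun, ← hval]
  exact key
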